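/- arXiv:math/0503079 — 4 statements merged into one kernel-verified Lean document; each statement's English description precedes it below -/
import Mathlib

section
/- Let a ∈ Δ, c ∈ Δ with c ≠ 0, and let z₁, z₂ be the two roots of z² − z(a − \bar{a}c) − c = 0 (the preimages of c under the Blaschke product A_a(z) = z(z−a)/(1−\bar{a}z)). Then the hyperbolic distance ρ(0, z₁) equals the hyperbolic distance ρ(a, z₂). -/
open Complex Metric Filter

/-- Poincaré distance on the unit disk, normalized with density 1/(1-|z|^2). -/
noncomputable def rho (z w : ℂ) : ℝ :=
  (1 / 2) * Real.log ((1 + ‖(z - w) / (1 - (starRingEnd ℂ) w * z)‖) /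
    (1 - ‖(z - w) / (1 - (starRingEnd ℂ) w * z)‖))

/-- The open unit disk Δ. -/
def unitDisk : Set ℂ := Metric.ball (0 : ℂ) 1

/-- The hyperbolic disk of center `a` and ρ-radius `r` inside Δ. -/
def hBall (a : ℂ) (r : ℝ) : Set ℂ := {z ∈ unitDisk | rho a z < r}

/-- `X` is a ρ-Bloch subdomain of Δ: the ρ-radii of hyperbolic disks contained in `X`
are bounded. -/
def IsBloch (X : Set ℂ) : Prop :=
  ∃ R : ℝ, ∀ a ∈ unitDisk, ∀ r : ℝ, hBall a r ⊆ X → r ≤ R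

/-- `f` is holomorphic on Δ with values in `X`. -/
def HolOn (f : ℂ → ℂ) (X : Set ℂ) : Prop :=
  DifferentiableOn ℂ f unitDisk ∧ Set.MapsTo f unitDisk X

/-- The compositions `F_n = f 1 ∘ f 2 ∘ ⋯ ∘ f n` (with `F_0 = id`). -/
def comps (f : ℕ → ℂ → ℂ) : ℕ → ℂ → ℂ
  | 0 => id
  | n + 1 => comps f n ∘ f (n + 1)

/-- `X` is degenerate in Δ: every locally uniform subsequential limit of the
compositions of any sequence in Hol(Δ, X) is constant on Δ. -/
def Degenerate (X : Set ℂ) : Prop :=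
  ∀ f : ℕ → ℂ → ℂ, (∀ n, 1 ≤ n → HolOn (f n) X) →
    ∀ φ : ℕ → ℕ, StrictMono φ → ∀ F : ℂ → ℂ,
      TendstoLocallyUniformlyOn (fun k => comps f (φ k)) F atTop unitDisk →
      ∀ z ∈ unitDisk, ∀ w ∈ unitDisk, F z = F w

/-- The Poincaré distance of the hyperbolic domain `X` (as the distance pushed
forward from the disk by holomorphic maps; for domains covered by Δ this agrees
with the Poincaré metric of `X`). -/
noncomputable def rhoX (X : Set ℂ) (a b : ℂ) : ℝ :=
  sInf {r : ℝ | ∃ f : ℂ → ℂ, ∃ t ∈ unitDisk,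
    HolOn f X ∧ f 0 = a ∧ f t = b ∧ r = rho 0 t}

/-- If `z₁, z₂` are the two roots of `z² - z(a - ā c) - c = 0` (the preimages of
`c ≠ 0` under `A_a(z) = z(z-a)/(1-ā z)`), then `ρ(0, z₁) = ρ(a, z₂)`. -/
theorem stmt1 (a c z₁ z₂ : ℂ) (ha : a ∈ unitDisk) (hc : c ∈ unitDisk) (hc0 : c ≠ 0)
    (hroots : ∀ z : ℂ,
      z ^ 2 - z * (a - (starRingEnd ℂ) a * c) - c = 0 ↔ z = z₁ ∨ z = z₂) :
    rho 0 z₁ = rho a z₂ := by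
  set s := a - (starRingEnd ℂ) a * c with hs
  have h1 : z₁ ^ 2 - z₁ * s - c = 0 := (hroots z₁).mpr (Or.inl rfl)
  have h2 : z₂ ^ 2 - z₂ * s - c = 0 := (hroots z₂).mpr (Or.inr rfl)
  have h3 : (s - z₁) ^ 2 - (s - z₁) * s - c = 0 := by linear_combination h1
  have hsum_prod : z₁ + z₂ = s ∧ z₁ * z₂ = -c := by
    rcases (hroots (s - z₁)).mp h3 with h | h
    · -- s = 2 z₁, double root case
      have hz : (z₂ - z₁) ^ 2 = 0 := by linear_combination h2 - h1 + (z₂ - z₁) * h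
      have hz' : z₂ = z₁ :=
        sub_eq_zero.mp (pow_eq_zero_iff (n := 2) (by norm_num) |>.mp hz)
      constructor
      · rw [hz']; linear_combination -h
      · rw [hz']; linear_combination -h1 - z₁ * h
    · constructor
      · linear_combination -h
      · linear_combination -h1 - z₁ * h
  obtain ⟨hsum, hprod⟩ := hsum_prod
  have key : z₂ - a = -z₁ * (1 - (starRingEnd ℂ) a * z₂) := by
    rw [hs] at hsum
    linear_combination hsum - (starRingEnd ℂ) a * hprod
  have ha1 : ‖a‖ < 1 := by simpa [unitDisk, Complex.dist_eq] using ha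
  have hden : (1 : ℂ) - (starRingEnd ℂ) a * z₂ ≠ 0 := by
    intro h0
    have hz2a : z₂ = a := by
      have hk := key
      rw [h0, mul_zero] at hk
      exact sub_eq_zero.mp hk
    rw [hz2a] at h0
    have h1' : ‖(starRingEnd ℂ) a * a‖ = 1 := by
      rw [sub_eq_zero] at h0
      rw [← h0]
      simp
    rw [norm_mul, Complex.norm_conj] at h1'
    nlinarith [norm_nonneg a]
  have habs : ‖(a - z₂) / (1 - (starRingEnd ℂ) z₂ * a)‖ = ‖z₁‖ := by
    have e1 : a - z₂ = z₁ * (1 - (starRingEnd ℂ) a * z₂) := by linear_combination -key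
    have e2 : (1 : ℂ) - (starRingEnd ℂ) z₂ * a = (starRingEnd ℂ) (1 - (starRingEnd ℂ) a * z₂) := by
      simp [map_sub, map_mul, mul_comm]
    rw [e1, e2, norm_div, norm_mul, Complex.norm_conj, mul_div_assoc,
      div_self (norm_ne_zero_iff.mpr hden), mul_one]
  unfold rho
  rw [habs]
  simp
end

section
/- Let X ⊂ Δ be a subdomain, a ∈ X, and let C = R(X,Δ,a) be the radius (in the Poincaré metric ρ of Δ) of the largest hyperbolic disk centered at a contained in X. If z ∈ X satisfies ρ(a,z) < 1 < C, then ρ_X(a,z) ≤ (1+ε(C))·ρ(a,z), where ε(C) → 0 as C → ∞. -/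
open Complex Metric Filter

/- ---------------- Auxiliary material ---------------- -/

noncomputable def TT (C : ℝ) : ℝ := (Real.exp (2*C) - 1) / (Real.exp (2*C) + 1)

noncomputable def LL (x : ℝ) : ℝ := (1/2) * Real.log ((1+x)/(1-x))

lemma TT_lt_one (C : ℝ) : TT C < 1 := by
  have h2 : (0:ℝ) < Real.exp (2*C) + 1 := by positivity
  rw [TT, div_lt_one h2]; linarith

lemma TT_strictMono : StrictMono TT := by
  intro p q hpq
  have hp : (0:ℝ) < Real.exp (2*p) := Real.exp_pos _
  have hq : (0:ℝ) < Real.exp (2*q) := Real.exp_pos _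
  have h : Real.exp (2*p) < Real.exp (2*q) := Real.exp_lt_exp.2 (by linarith)
  rw [TT, TT, div_lt_div_iff₀ (by positivity) (by positivity)]
  nlinarith

lemma TT_pos {C : ℝ} (hC : 0 < C) : 0 < TT C := by
  have h := TT_strictMono hC
  have h0 : TT 0 = 0 := by simp [TT]
  linarith

lemma LL_TT (C : ℝ) : LL (TT C) = C := by
  have hE : (0:ℝ) < Real.exp (2*C) := Real.exp_pos _
  have hE1 : Real.exp (2*C) + 1 ≠ 0 := by positivity
  have h : (1 + TT C)/(1 - TT C) = Real.exp (2*C) := by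
    rw [TT]; field_simp; ring
  rw [LL, h, Real.log_exp]; ring

lemma LL_lt_LL {p q : ℝ} (hp : 0 ≤ p) (hpq : p < q) (hq : q < 1) : LL p < LL q := by
  have h1 : (0:ℝ) < 1 - q := by linarith
  have h2 : (0:ℝ) < 1 - p := by linarith
  have h : (1+p)/(1-p) < (1+q)/(1-q) := by
    rw [div_lt_div_iff₀ h2 h1]; nlinarith
  have := Real.log_lt_log (by positivity) h
  rw [LL, LL]; linarith

lemma LL_mono {p q : ℝ} (hp : 0 ≤ p) (hpq : p ≤ q) (hq : q < 1) : LL p ≤ LL q := by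
  rcases eq_or_lt_of_le hpq with h | h
  · rw [h]
  · exact (LL_lt_LL hp h hq).le

lemma LL_nonneg {x : ℝ} (h0 : 0 ≤ x) (h1 : x < 1) : 0 ≤ LL x := by
  have h : (1:ℝ) ≤ (1+x)/(1-x) := by
    rw [le_div_iff₀ (by linarith)]; linarith
  have := Real.log_nonneg h
  rw [LL]; linarith

lemma le_two_LL {x : ℝ} (h0 : 0 ≤ x) (h1 : x < 1) : x ≤ 2 * LL x := by
  have hx1 : (0:ℝ) < 1 - x := by linarith
  have hA : Real.log (1 - x) ≤ -x := by
    have := Real.log_le_sub_one_of_pos hx1; linarith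
  have hB : (0:ℝ) ≤ Real.log (1 + x) := Real.log_nonneg (by linarith)
  rw [LL, Real.log_div (by linarith) (by linarith)]; linarith

lemma LL_sub_le {x y : ℝ} (hx : 0 ≤ x) (hxy : x ≤ y) (hy : y < 1) :
    LL y - LL x ≤ (y - x)/(1 - y) := by
  have h1y : (0:ℝ) < 1 - y := by linarith
  have h1x : (0:ℝ) < 1 - x := by linarith
  have hA : Real.log (1+y) - Real.log (1+x) ≤ (y - x)/(1+x) := by
    rw [← Real.log_div (by linarith) (by linarith)]
    have := Real.log_le_sub_one_of_pos
      (show (0:ℝ) < (1+y)/(1+x) from div_pos (by linarith) (by linarith))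
    have he : (1+y)/(1+x) - 1 = (y-x)/(1+x) := by field_simp; ring
    linarith
  have hB : Real.log (1-x) - Real.log (1-y) ≤ (y - x)/(1-y) := by
    rw [← Real.log_div (by linarith) (by linarith)]
    have := Real.log_le_sub_one_of_pos
      (show (0:ℝ) < (1-x)/(1-y) from div_pos (by linarith) (by linarith))
    have he : (1-x)/(1-y) - 1 = (y-x)/(1-y) := by field_simp; ring
    linarith
  have hC : (y - x)/(1+x) ≤ (y - x)/(1-y) := by
    apply div_le_div_of_nonneg_left (by linarith) h1y; linarith
  rw [LL, LL, Real.log_div (by linarith) h1y.ne', Real.log_div (by linarith) h1x.ne']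
  linarith

noncomputable def phi (a v : ℂ) : ℂ := (v + a) / (1 + (starRingEnd ℂ) a * v)

lemma one_sub_ne {w : ℂ} (h : ‖w‖ < 1) : (1:ℂ) - w ≠ 0 := by
  intro h0
  have : w = 1 := by linear_combination -h0
  simp [this] at h

lemma one_add_ne {w : ℂ} (h : ‖w‖ < 1) : (1:ℂ) + w ≠ 0 := by
  intro h0
  have : w = -1 := by linear_combination h0
  simp [this] at h

lemma abs_small {a v : ℂ} (ha : ‖a‖ < 1) (hv : ‖v‖ < 1) :
    ‖(starRingEnd ℂ) a * v‖ < 1 := by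
  rw [norm_mul, Complex.norm_conj]
  have h1 := norm_nonneg a
  have h2 := norm_nonneg v
  nlinarith

lemma normSq_key (a z : ℂ) :
    Complex.normSq (1 - (starRingEnd ℂ) a * z) - Complex.normSq (z - a)
      = (1 - Complex.normSq a) * (1 - Complex.normSq z) := by
  simp only [Complex.normSq_apply, Complex.sub_re, Complex.sub_im, Complex.mul_re,
    Complex.mul_im, Complex.conj_re, Complex.conj_im, Complex.one_re, Complex.one_im]
  ring

lemma abs_moeb_lt_one {a z : ℂ} (ha : ‖a‖ < 1) (hz : ‖z‖ < 1) :
    ‖(z - a) / (1 - (starRingEnd ℂ) a * z)‖ < 1 := by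
  have hden : (1:ℂ) - (starRingEnd ℂ) a * z ≠ 0 := one_sub_ne (abs_small ha hz)
  rw [norm_div, div_lt_one (norm_pos_iff.2 hden)]
  have hk := normSq_key a z
  have h1 : Complex.normSq a < 1 := by rw [← Complex.sq_norm]; nlinarith [norm_nonneg a]
  have h2 : Complex.normSq z < 1 := by rw [← Complex.sq_norm]; nlinarith [norm_nonneg z]
  have hsq : ‖z - a‖ ^ 2 < ‖1 - (starRingEnd ℂ) a * z‖ ^ 2 := by
    rw [Complex.sq_norm, Complex.sq_norm]; nlinarith
  exact lt_of_pow_lt_pow_left₀ 2 (norm_nonneg _) hsq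

lemma abs_phi_lt {a v : ℂ} (ha : ‖a‖ < 1) (hv : ‖v‖ < 1) :
    ‖phi a v‖ < 1 := by
  have h := abs_moeb_lt_one (a := -a) (z := v) (by simpa using ha) hv
  have he : (v - -a) / (1 - (starRingEnd ℂ) (-a) * v) = phi a v := by
    rw [phi]; ring_nf; rw [map_neg]; ring_nf
  rwa [he] at h

lemma d_phi {a v : ℂ} (ha : ‖a‖ < 1) (hv : ‖v‖ < 1) :
    ‖(a - phi a v) / (1 - (starRingEnd ℂ) (phi a v) * a)‖ = ‖v‖ := by
  have hden : (1:ℂ) + (starRingEnd ℂ) a * v ≠ 0 := one_add_ne (abs_small ha hv)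
  have hden' : (1:ℂ) + a * (starRingEnd ℂ) v ≠ 0 := by
    intro h0
    apply hden
    have h : (starRingEnd ℂ) ((1:ℂ) + a * (starRingEnd ℂ) v) = 0 := by rw [h0]; simp
    simpa [map_add, map_mul, Complex.conj_conj] using h
  have haa : (1:ℂ) - (starRingEnd ℂ) a * a ≠ 0 := one_sub_ne (abs_small ha ha)
  have h1 : a - phi a v = -(v * (1 - (starRingEnd ℂ) a * a)) / (1 + (starRingEnd ℂ) a * v) := by
    rw [phi, eq_div_iff hden, sub_mul, div_mul_cancel₀ _ hden]; ring
  have h2 : 1 - (starRingEnd ℂ) (phi a v) * a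
      = (1 - (starRingEnd ℂ) a * a) / (1 + a * (starRingEnd ℂ) v) := by
    rw [phi]
    simp only [map_div₀, map_add, map_mul, map_one, Complex.conj_conj]
    rw [eq_div_iff hden', div_mul_eq_mul_div, sub_mul, div_mul_cancel₀ _ hden']; ring
  have hCC : ‖1 + a * (starRingEnd ℂ) v‖ = ‖1 + (starRingEnd ℂ) a * v‖ := by
    have h : (1:ℂ) + a * (starRingEnd ℂ) v = (starRingEnd ℂ) (1 + (starRingEnd ℂ) a * v) := by
      simp only [map_add, map_mul, map_one, Complex.conj_conj]
    rw [h, Complex.norm_conj]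
  have hB : ‖1 - (starRingEnd ℂ) a * a‖ ≠ 0 := norm_ne_zero_iff.2 haa
  have hC : ‖1 + (starRingEnd ℂ) a * v‖ ≠ 0 := norm_ne_zero_iff.2 hden
  rw [h1, h2]
  simp only [norm_div, norm_mul, norm_neg, hCC]
  field_simp

lemma rho_eq_LL (p q : ℂ) :
    rho p q = LL (‖(p - q) / (1 - (starRingEnd ℂ) q * p)‖) := rfl

lemma rho_zero (t : ℂ) : rho 0 t = LL (‖t‖) := by
  simp [rho, LL]

lemma mem_unitDisk {w : ℂ} : w ∈ unitDisk ↔ ‖w‖ < 1 := by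
  simp [unitDisk, mem_ball_zero_iff]

/-- If the hyperbolic disk of ρ-radius `C > 1` about `a` lies in the subdomain `X` of Δ,
and `z ∈ X` with `ρ(a,z) < 1`, then `ρ_X(a,z) ≤ (1 + ε(C)) ρ(a,z)` where
`ε(C) → 0` as `C → ∞`. -/
theorem stmt3 :
    ∃ ε : ℝ → ℝ, Filter.Tendsto ε Filter.atTop (nhds 0) ∧
      ∀ (X : Set ℂ) (a z : ℂ) (C : ℝ), IsOpen X → IsConnected X → X ⊆ unitDisk →
        a ∈ X → z ∈ X → hBall a C ⊆ X → rho a z < 1 → 1 < C →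
        rhoX X a z ≤ (1 + ε C) * rho a z := by
  refine ⟨fun C => 2 * (1 - TT C) / (TT C - TT 1), ?_, ?_⟩
  · -- tendsto
    have hT : Tendsto TT atTop (nhds 1) := by
      have hE : Tendsto (fun C : ℝ => Real.exp (2*C) + 1) atTop atTop := by
        apply Filter.tendsto_atTop_add_const_right
        exact Real.tendsto_exp_atTop.comp (Filter.tendsto_id.const_mul_atTop two_pos)
      have h2 : Tendsto (fun C : ℝ => 2 / (Real.exp (2*C) + 1)) atTop (nhds 0) :=
        Filter.Tendsto.div_atTop tendsto_const_nhds hE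
      have heq : TT = fun C : ℝ => 1 - 2 / (Real.exp (2*C) + 1) := by
        funext C
        have hE1 : Real.exp (2*C) + 1 ≠ 0 := by positivity
        rw [TT]; field_simp; ring
      rw [heq]
      simpa using tendsto_const_nhds.sub h2
    have hnum : Tendsto (fun C => 2 * (1 - TT C)) atTop (nhds (2 * ((1:ℝ) - 1))) :=
      (Filter.Tendsto.sub tendsto_const_nhds hT).const_mul 2
    norm_num at hnum
    have hden : Tendsto (fun C => TT C - TT 1) atTop (nhds (1 - TT 1)) :=
      hT.sub_const _
    have hne : (1:ℝ) - TT 1 ≠ 0 := sub_ne_zero.2 (TT_lt_one 1).ne'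
    have h := hnum.div hden hne
    rw [zero_div] at h
    exact h
  · intro X a z C _ _ hXsub haX hzX hball hrz hC
    have haD : ‖a‖ < 1 := mem_unitDisk.1 (hXsub haX)
    have hzD : ‖z‖ < 1 := mem_unitDisk.1 (hXsub hzX)
    set s : ℝ := TT C with hs_def
    have hs0 : 0 < s := TT_pos (by linarith)
    have hs1 : s < 1 := TT_lt_one C
    have hsT1 : TT 1 < s := TT_strictMono hC
    have hT1pos : 0 < TT 1 := TT_pos one_pos
    have hT1lt : TT 1 < 1 := TT_lt_one 1
    set u : ℂ := (z - a) / (1 - (starRingEnd ℂ) a * z) with hu_def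
    have hu : ‖u‖ < 1 := abs_moeb_lt_one haD hzD
    set x : ℝ := ‖u‖ with hx_def
    have hx0 : 0 ≤ x := norm_nonneg u
    -- rho a z = LL x
    have hflip : (1:ℂ) - (starRingEnd ℂ) z * a = (starRingEnd ℂ) (1 - (starRingEnd ℂ) a * z) := by
      rw [map_sub, map_one, map_mul, Complex.conj_conj, mul_comm]
    have hrho_az : rho a z = LL x := by
      rw [rho_eq_LL]
      congr 1
      rw [hx_def, hu_def, norm_div, norm_div, hflip, Complex.norm_conj, norm_sub_rev]
    have hx_lt : x < TT 1 := by
      by_contra h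
      push_neg at h
      have := LL_mono hT1pos.le h hu
      rw [LL_TT] at this
      rw [hrho_az] at hrz
      linarith
    have hx1 : x < 1 := lt_trans hx_lt hT1lt
    -- the map f
    set f : ℂ → ℂ := fun w => phi a ((s:ℂ) * w) with hf_def
    have hsw_lt : ∀ w ∈ unitDisk, ‖(s:ℂ) * w‖ < s := by
      intro w hw
      have hw1 : ‖w‖ < 1 := mem_unitDisk.1 hw
      rw [norm_mul, Complex.norm_real, Real.norm_eq_abs, abs_of_pos hs0]
      exact mul_lt_of_lt_one_right hs0 hw1
    have hsw_lt1 : ∀ w ∈ unitDisk, ‖(s:ℂ) * w‖ < 1 :=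
      fun w hw => lt_trans (hsw_lt w hw) hs1
    have hHol : HolOn f X := by
      constructor
      · have : f = fun w => ((s:ℂ) * w + a) / (1 + (starRingEnd ℂ) a * ((s:ℂ) * w)) := rfl
        rw [this]
        apply DifferentiableOn.div
        · exact (Differentiable.differentiableOn (by fun_prop))
        · exact (Differentiable.differentiableOn (by fun_prop))
        · intro w hw
          exact one_add_ne (abs_small haD (hsw_lt1 w hw))
      · intro w hw
        apply hball
        refine ⟨mem_unitDisk.2 (abs_phi_lt haD (hsw_lt1 w hw)), ?_⟩
        rw [rho_eq_LL, d_phi haD (hsw_lt1 w hw)]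
        calc LL (‖(s:ℂ) * w‖) < LL s :=
              LL_lt_LL (norm_nonneg _) (hsw_lt w hw) hs1
          _ = C := LL_TT C
    have hf0 : f 0 = a := by
      simp [hf_def, phi]
    have hsne : ((s:ℝ) : ℂ) ≠ 0 := Complex.ofReal_ne_zero.2 hs0.ne'
    set t : ℂ := u / (s:ℂ) with ht_def
    have habs_t : ‖t‖ = x / s := by
      rw [ht_def, norm_div, Complex.norm_real, Real.norm_eq_abs, abs_of_pos hs0]
    have hxs_lt1 : x / s < 1 := (div_lt_one hs0).2 (lt_trans hx_lt hsT1)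
    have htD : t ∈ unitDisk := mem_unitDisk.2 (by rw [habs_t]; exact hxs_lt1)
    have hft : f t = z := by
      have hst : (s:ℂ) * t = u := by
        rw [ht_def, mul_div_cancel₀ _ hsne]
      have h1z : (1:ℂ) - (starRingEnd ℂ) a * z ≠ 0 := one_sub_ne (abs_small haD hzD)
      have hdenu : (1:ℂ) + (starRingEnd ℂ) a * u ≠ 0 := one_add_ne (abs_small haD hu)
      rw [hf_def]
      show phi a ((s:ℂ) * t) = z
      rw [hst, phi, div_eq_iff hdenu, hu_def]
      rw [div_add' _ _ _ h1z, div_eq_iff h1z, mul_div_assoc', mul_add, mul_div_assoc', add_mul, div_mul_cancel₀ _ h1z]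
      ring
    -- rhoX ≤ rho 0 t
    have hbdd : BddBelow {r : ℝ | ∃ f : ℂ → ℂ, ∃ t ∈ unitDisk,
        HolOn f X ∧ f 0 = a ∧ f t = z ∧ r = rho 0 t} := by
      refine ⟨0, ?_⟩
      rintro r ⟨g, t', ht', _, _, _, rfl⟩
      rw [rho_zero]
      exact LL_nonneg (norm_nonneg _) (mem_unitDisk.1 ht')
    have hmem : rho 0 t ∈ {r : ℝ | ∃ f : ℂ → ℂ, ∃ t ∈ unitDisk,
        HolOn f X ∧ f 0 = a ∧ f t = z ∧ r = rho 0 t} :=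
      ⟨f, t, htD, hHol, hf0, hft, rfl⟩
    have hle : rhoX X a z ≤ rho 0 t := csInf_le hbdd hmem
    -- final numeric bound
    set y : ℝ := x / s with hy_def
    have hxy : x ≤ y := by
      rw [hy_def, le_div_iff₀ hs0]
      nlinarith
    have hyB : y < TT 1 / s := by
      rw [hy_def]
      gcongr
    have hB1 : TT 1 / s < 1 := (div_lt_one hs0).2 hsT1
    have hy1 : y < 1 := lt_trans hyB hB1
    have hD : 0 < s - TT 1 := by linarith
    have hA := LL_sub_le hx0 hxy hy1
    have hys : y * s = x := div_mul_cancel₀ x hs0.ne'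
    have hstep : (y - x)/(1 - y) ≤ x * (1 - s) / (s - TT 1) := by
      have h2 : (s - TT 1)/s = 1 - TT 1/s := by field_simp
      have h1 : (s - TT 1)/s < 1 - y := by rw [h2]; linarith
      have hyx : (0:ℝ) ≤ y - x := by linarith
      have hpos : (0:ℝ) < (s - TT 1)/s := by positivity
      calc (y - x)/(1 - y) ≤ (y - x)/((s - TT 1)/s) :=
            div_le_div_of_nonneg_left hyx hpos h1.le
        _ = (y - x) * s / (s - TT 1) := div_div_eq_mul_div _ _ _
        _ = x * (1 - s) / (s - TT 1) := by
            have he : (y - x) * s = x * (1 - s) := by linear_combination hys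
            rw [he]
    have hxle := le_two_LL hx0 hx1
    have hLLx0 : 0 ≤ LL x := LL_nonneg hx0 hx1
    have hstep2 : x * (1 - s)/(s - TT 1) ≤ 2 * LL x * (1 - s)/(s - TT 1) := by
      gcongr
    have hrt : rho 0 t = LL y := by rw [rho_zero, habs_t]
    have final : LL y ≤ (1 + 2 * (1 - s)/(s - TT 1)) * LL x := by
      have he : (1 + 2 * (1 - s)/(s - TT 1)) * LL x = LL x + 2 * LL x * (1 - s)/(s - TT 1) := by
        ring
      rw [he]
      linarith
    rw [hrho_az]
    calc rhoX X a z ≤ rho 0 t := hle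
      _ = LL y := hrt
      _ ≤ (1 + 2 * (1 - s)/(s - TT 1)) * LL x := final
end

section
/- Suppose X ⊂ Δ is not ρ-Bloch, a₀, w₀ ∈ X with ρ_X(a₀, w₀) < 1/2, and (ε_n) is a positive sequence with ∏_{n=1}^∞ (1+ε_n)² ≤ 2. Suppose sequences a_n, w_n ∈ X, \tilde{w}_n ∈ Δ, and holomorphic maps f_n : Δ → X satisfy f_n(0) = f_n(a_n) = a_{n−1}, f_n(w_n) = f_n(\tilde{w}_n) = w_{n−1}, and ρ(0, \tilde{w}_n) ≤ ∏_{i=1}^n (1+ε_i) · ρ_X(a₀, w₀). Then any locally uniform subsequential limit F of F_n = f₁ ∘ ⋯ ∘ f_n satisfies F(0) = a₀ and F(\tilde{w}) = w₀ for some \tilde{w} ∈ Δ with ρ(0, \tilde{w}) ≤ 1; in particular F is nonconstant. -/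
open Complex Metric Filter Topology

lemma rho_zero_s15 (z : ℂ) :
    rho 0 z = (1 / 2) * Real.log ((1 + ‖z‖) / (1 - ‖z‖)) := by
  simp [rho]

lemma exp_sqrt2_lt : Real.exp (Real.sqrt 2) < 17 / 3 := by
  have h1 : Real.sqrt 2 ≤ 3 / 2 := by
    nlinarith [Real.sq_sqrt (show (0:ℝ) ≤ 2 by norm_num), Real.sqrt_nonneg 2]
  have h2 : Real.exp (Real.sqrt 2) ≤ Real.exp (3 / 2) := Real.exp_le_exp.mpr h1
  have h3 : Real.exp (3 / 2) * Real.exp (3 / 2) = Real.exp 3 := by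
    rw [← Real.exp_add]; norm_num
  have h4 : Real.exp 3 = Real.exp 1 * Real.exp 1 * Real.exp 1 := by
    rw [← Real.exp_add, ← Real.exp_add]; norm_num
  have he : Real.exp 1 < 2.7182818286 := Real.exp_one_lt_d9
  have hp : 0 < Real.exp (3 / 2) := Real.exp_pos _
  have hp1 : 0 < Real.exp 1 := Real.exp_pos _
  nlinarith

lemma sqrt2_lt_log : Real.sqrt 2 < Real.log (17 / 3) :=
  (Real.lt_log_iff_exp_lt (by norm_num)).mpr exp_sqrt2_lt

lemma log_lt_two : Real.log (17 / 3) < 2 := by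
  rw [Real.log_lt_iff_lt_exp (by norm_num)]
  have h : Real.exp 2 = Real.exp 1 * Real.exp 1 := by rw [← Real.exp_add]; norm_num
  nlinarith [Real.exp_one_gt_d9]

lemma abs_le_of_rho_le {z : ℂ} (hz : ‖z‖ < 1)
    (h : rho 0 z ≤ Real.sqrt 2 / 2) : ‖z‖ ≤ 0.7 := by
  by_contra hgt
  push_neg at hgt
  set d := ‖z‖ with hd
  have hd0 : (0:ℝ) ≤ d := norm_nonneg _
  have hratio : (17:ℝ) / 3 < (1 + d) / (1 - d) := by
    rw [lt_div_iff₀ (by norm_num; linarith)]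
    norm_num at hgt ⊢
    linarith
  have hlog : Real.log (17 / 3) < Real.log ((1 + d) / (1 - d)) :=
    Real.log_lt_log (by norm_num) hratio
  rw [rho_zero_s15] at h
  linarith [sqrt2_lt_log]

lemma rho_le_one_of_abs_le {z : ℂ} (h : ‖z‖ ≤ 0.7) : rho 0 z ≤ 1 := by
  rw [rho_zero_s15]
  have hd0 : 0 ≤ ‖z‖ := norm_nonneg _
  have h1 : (0:ℝ) < 1 - ‖z‖ := by norm_num at h ⊢; linarith
  have hratio : (1 + ‖z‖) / (1 - ‖z‖) ≤ 17 / 3 := by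
    rw [div_le_div_iff₀ h1 (by norm_num)]
    norm_num at h ⊢
    linarith
  have hpos : (0:ℝ) < (1 + ‖z‖) / (1 - ‖z‖) := by positivity
  have := (Real.log_le_log_iff hpos (by norm_num)).mpr hratio
  linarith [log_lt_two]

/-- The construction in Theorem 2.3: under the stated recursive conditions, any locally
uniform subsequential limit `F` of the compositions satisfies `F 0 = a₀` and
`F w̃ = w₀` for some `w̃` with `ρ(0, w̃) ≤ 1`; in particular `F` is nonconstant. -/
theorem stmt15 (X : Set ℂ) (hXo : IsOpen X) (hXc : IsConnected X) (hXs : X ⊆ unitDisk)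
    (hnb : ¬ IsBloch X)
    (ε : ℕ → ℝ) (hε : ∀ n, 0 < ε n)
    (hprod : ∀ N, ∏ i ∈ Finset.range N, (1 + ε i) ^ 2 ≤ 2)
    (a w wt : ℕ → ℂ) (f : ℕ → ℂ → ℂ)
    (haX : ∀ n, a n ∈ X) (hwX : ∀ n, w n ∈ X)
    (hdist : rhoX X (a 0) (w 0) < 1 / 2) (hne : a 0 ≠ w 0)
    (hhol : ∀ n, 1 ≤ n → HolOn (f n) X)
    (h0 : ∀ n, 1 ≤ n → f n 0 = a (n - 1))
    (han : ∀ n, 1 ≤ n → f n (a n) = a (n - 1))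
    (hwn : ∀ n, 1 ≤ n → f n (w n) = w (n - 1))
    (hwtn : ∀ n, 1 ≤ n → f n (wt n) = w (n - 1))
    (hwtd : ∀ n, 1 ≤ n → wt n ∈ unitDisk ∧
      rho 0 (wt n) ≤ (∏ i ∈ Finset.Icc 1 n, (1 + ε i)) * rhoX X (a 0) (w 0)) :
    ∀ φ : ℕ → ℕ, StrictMono φ → ∀ F : ℂ → ℂ,
      TendstoLocallyUniformlyOn (fun k => comps f (φ k)) F atTop unitDisk →
      F 0 = a 0 ∧ (∃ w' ∈ unitDisk, rho 0 w' ≤ 1 ∧ F w' = w 0) ∧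
        ∃ z ∈ unitDisk, ∃ z' ∈ unitDisk, F z ≠ F z' := by
  -- preliminary identities about comps
  have comps_a : ∀ n, comps f n (a n) = a 0 := by
    intro n
    induction n with
    | zero => simp [comps]
    | succ m ih =>
      have h := han (m + 1) (by omega)
      simp only [Nat.add_sub_cancel] at h
      show comps f m (f (m + 1) (a (m + 1))) = a 0
      rw [h]; exact ih
  have comps_w : ∀ n, comps f n (w n) = w 0 := by
    intro n
    induction n with
    | zero => simp [comps]
    | succ m ih =>
      have h := hwn (m + 1) (by omega)
      simp only [Nat.add_sub_cancel] at h
      show comps f m (f (m + 1) (w (m + 1))) = w 0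
      rw [h]; exact ih
  have comps_zero : ∀ n, 1 ≤ n → comps f n 0 = a 0 := by
    rintro (_ | m) hn
    · omega
    · have h := h0 (m + 1) (by omega)
      simp only [Nat.add_sub_cancel] at h
      show comps f m (f (m + 1) 0) = a 0
      rw [h]; exact comps_a m
  have comps_wt : ∀ n, 1 ≤ n → comps f n (wt n) = w 0 := by
    rintro (_ | m) hn
    · omega
    · have h := hwtn (m + 1) (by omega)
      simp only [Nat.add_sub_cancel] at h
      show comps f m (f (m + 1) (wt (m + 1))) = w 0
      rw [h]; exact comps_w m
  have hcont : ∀ n, ContinuousOn (comps f n) unitDisk := by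
    intro n
    induction n with
    | zero => exact continuousOn_id
    | succ m ih =>
      have h := hhol (m + 1) (by omega)
      exact ih.comp h.1.continuousOn (h.2.mono_right hXs)
  -- bound on rho 0 (wt n)
  have hP : ∀ n, (∏ i ∈ Finset.Icc 1 n, (1 + ε i)) ≤ Real.sqrt 2 := by
    intro n
    have h1 : ∀ i, (1:ℝ) ≤ 1 + ε i := fun i => by linarith [hε i]
    have h3 : (∏ i ∈ Finset.Icc 1 n, (1 + ε i)) ^ 2 ≤ 2 := by
      have hins : Finset.range (n + 1) = insert 0 (Finset.Icc 1 n) := by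
        ext i
        simp only [Finset.mem_range, Finset.mem_insert, Finset.mem_Icc]
        omega
      have hpr := hprod (n + 1)
      rw [hins, Finset.prod_insert (by simp)] at hpr
      have hnn : (0:ℝ) ≤ ∏ i ∈ Finset.Icc 1 n, (1 + ε i) ^ 2 :=
        Finset.prod_nonneg fun i _ => sq_nonneg _
      have h0' : (1:ℝ) ≤ (1 + ε 0) ^ 2 := by nlinarith [hε 0]
      rw [← Finset.prod_pow]
      nlinarith
    have h4 : (0:ℝ) ≤ ∏ i ∈ Finset.Icc 1 n, (1 + ε i) :=
      Finset.prod_nonneg fun i _ => by linarith [hε i]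
    nlinarith [Real.sq_sqrt (show (0:ℝ) ≤ 2 by norm_num), Real.sqrt_nonneg 2]
  have hrho : ∀ n, 1 ≤ n → rho 0 (wt n) ≤ Real.sqrt 2 / 2 := by
    intro n hn
    have hb := (hwtd n hn).2
    have h4 : (0:ℝ) ≤ ∏ i ∈ Finset.Icc 1 n, (1 + ε i) :=
      Finset.prod_nonneg fun i _ => by linarith [hε i]
    rcases le_or_gt (rhoX X (a 0) (w 0)) 0 with hle | hgt
    · have : (∏ i ∈ Finset.Icc 1 n, (1 + ε i)) * rhoX X (a 0) (w 0) ≤ 0 :=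
        mul_nonpos_of_nonneg_of_nonpos h4 hle
      have := Real.sqrt_nonneg 2
      linarith
    · have : (∏ i ∈ Finset.Icc 1 n, (1 + ε i)) * rhoX X (a 0) (w 0)
          ≤ Real.sqrt 2 * (1 / 2) :=
        mul_le_mul (hP n) (le_of_lt hdist) hgt.le (Real.sqrt_nonneg 2)
      linarith
  have hwtK : ∀ n, 1 ≤ n → wt n ∈ Metric.closedBall (0:ℂ) 0.7 := by
    intro n hn
    have h1 : ‖wt n‖ < 1 := by
      have := (hwtd n hn).1
      simpa [unitDisk, Metric.mem_ball, Complex.dist_eq] using this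
    have := abs_le_of_rho_le h1 (hrho n hn)
    simpa [Metric.mem_closedBall, Complex.dist_eq] using this
  have hKsub : Metric.closedBall (0:ℂ) 0.7 ⊆ unitDisk := by
    intro z hz
    simp only [Metric.mem_closedBall, Complex.dist_eq, sub_zero] at hz
    simp only [unitDisk, Metric.mem_ball, Complex.dist_eq, sub_zero]
    norm_num at hz ⊢
    linarith
  intro φ hφ F hF
  have h0mem : (0:ℂ) ∈ unitDisk := by simp [unitDisk]
  -- F 0 = a 0
  have hF0 : F 0 = a 0 := by
    have ht := hF.tendsto_at h0mem
    have heq : (fun k => comps f (φ k) 0) =ᶠ[atTop] (fun _ => a 0) := by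
      filter_upwards [eventually_ge_atTop 1] with k hk
      exact comps_zero (φ k) (le_trans hk hφ.le_apply)
    exact tendsto_nhds_unique ht (Tendsto.congr' heq.symm tendsto_const_nhds)
  -- uniform convergence on the compact ball
  have hKc : IsCompact (Metric.closedBall (0:ℂ) 0.7) := isCompact_closedBall _ _
  have hTU : TendstoUniformlyOn (fun k => comps f (φ k)) F atTop
      (Metric.closedBall (0:ℂ) 0.7) :=
    (tendstoLocallyUniformlyOn_iff_forall_isCompact Metric.isOpen_ball).mp hF _ hKsub hKc
  rw [Metric.tendstoUniformlyOn_iff] at hTU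
  -- continuity of F
  have hFc : ContinuousOn F unitDisk :=
    hF.continuousOn (Eventually.of_forall fun k => hcont (φ k)).frequently
  -- extract convergent subsequence of the wt (φ (k+1))
  set u : ℕ → ℂ := fun k => wt (φ (k + 1)) with hu
  have huK : ∀ k, u k ∈ Metric.closedBall (0:ℂ) 0.7 := by
    intro k
    exact hwtK (φ (k + 1)) (le_trans (by omega) hφ.le_apply)
  obtain ⟨x, hxK, ψ, hψ, hψt⟩ := hKc.tendsto_subseq huK
  have hxD : x ∈ unitDisk := hKsub hxK
  have hxabs : ‖x‖ ≤ 0.7 := by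
    simpa [Metric.mem_closedBall, Complex.dist_eq] using hxK
  -- F x = w 0
  have hFx : F x = w 0 := by
    apply eq_of_forall_dist_le
    intro δ hδ
    have hε2 : 0 < δ / 2 := by linarith
    obtain ⟨N1, hN1⟩ := (hTU (δ / 2) hε2).exists_forall_of_atTop
    -- continuity at x gives convergence of F ∘ u ∘ ψ
    have hcw : Tendsto (fun k => F (u (ψ k))) atTop (𝓝 (F x)) := by
      apply (hFc x hxD).tendsto.comp
      rw [tendsto_nhdsWithin_iff]
      exact ⟨hψt, Eventually.of_forall fun k => hKsub (huK (ψ k))⟩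
    obtain ⟨N2, hN2⟩ := (Metric.tendsto_atTop.mp hcw (δ / 2) hε2)
    set k := max N1 N2 with hk
    have hkk : k ≤ ψ k := hψ.le_apply
    have hkN1 : N1 ≤ k := by rw [hk]; exact le_max_left _ _
    have hkN2 : N2 ≤ k := by rw [hk]; exact le_max_right _ _
    have hk1 : N1 ≤ ψ k + 1 := by omega
    have hkey : comps f (φ (ψ k + 1)) (u (ψ k)) = w 0 :=
      comps_wt (φ (ψ k + 1)) (le_trans (by omega) hφ.le_apply)
    have hd1 : dist (F (u (ψ k))) (comps f (φ (ψ k + 1)) (u (ψ k))) < δ / 2 :=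
      hN1 (ψ k + 1) hk1 (u (ψ k)) (huK (ψ k))
    have hd2 : dist (F (u (ψ k))) (F x) < δ / 2 := hN2 k hkN2
    calc dist (F x) (w 0) ≤ dist (F x) (F (u (ψ k)))
          + dist (F (u (ψ k))) (w 0) := dist_triangle _ _ _
      _ ≤ δ / 2 + δ / 2 := by
          rw [← hkey]
          rw [dist_comm (F x)]
          exact add_le_add hd2.le hd1.le
      _ = δ := by ring
  refine ⟨hF0, ⟨x, hxD, rho_le_one_of_abs_le hxabs, hFx⟩,
    0, h0mem, x, hxD, ?_⟩
  rw [hF0, hFx]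
  exact hne
end

section
/- (Gill–Lorentzen) If X is a relatively compact subdomain of Δ and f_n : Δ → X are holomorphic, then the compositions F_n = f₁ ∘ f₂ ∘ ⋯ ∘ f_n converge locally uniformly on Δ to a single constant c ∈ closure(X) ⊂ Δ. -/
open Complex Metric Filter Topology

/- ### Auxiliary lemmas for the proof ### -/

/-- Pseudo-hyperbolic distance on the unit disk. -/
noncomputable def pd (x y : ℂ) : ℝ :=
  ‖y - x‖ / ‖1 - (starRingEnd ℂ) x * y‖

lemma sq_id (r : ℝ) (x y : ℂ) :
    Complex.normSq ((r : ℂ) - (starRingEnd ℂ) x * y) - r * Complex.normSq (y - x)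
      = (r - Complex.normSq x) * (r - Complex.normSq y) := by
  simp only [Complex.normSq_apply, Complex.sub_re, Complex.sub_im, Complex.mul_re,
    Complex.mul_im, Complex.conj_re, Complex.conj_im, Complex.ofReal_re, Complex.ofReal_im]
  ring

lemma normSq_lt_one {x : ℂ} (hx : ‖x‖ < 1) : Complex.normSq x < 1 := by
  have h := Complex.sq_norm x
  nlinarith [norm_nonneg x]

lemma den_pos {x y : ℂ} (hx : ‖x‖ < 1) (hy : ‖y‖ < 1) :
    0 < ‖1 - (starRingEnd ℂ) x * y‖ := by
  have h := sq_id 1 x y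
  simp only [Complex.ofReal_one, one_mul] at h
  have h1 : Complex.normSq x < 1 := normSq_lt_one hx
  have h2 : Complex.normSq y < 1 := normSq_lt_one hy
  have h3 : 0 < Complex.normSq (1 - (starRingEnd ℂ) x * y) := by
    nlinarith [Complex.normSq_nonneg (y - x)]
  exact norm_pos_iff.mpr (Complex.normSq_pos.mp h3)

lemma pd_nonneg (x y : ℂ) : 0 ≤ pd x y := by
  unfold pd; positivity

lemma pd_lt_one {x y : ℂ} (hx : ‖x‖ < 1) (hy : ‖y‖ < 1) :
    pd x y < 1 := by
  rw [pd, div_lt_one (den_pos hx hy)]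
  have h := sq_id 1 x y
  simp only [Complex.ofReal_one, one_mul] at h
  have h1 : Complex.normSq x < 1 := normSq_lt_one hx
  have h2 : Complex.normSq y < 1 := normSq_lt_one hy
  have hA := Complex.sq_norm (y - x)
  have hB := Complex.sq_norm (1 - (starRingEnd ℂ) x * y)
  nlinarith [norm_nonneg (y - x), norm_nonneg (1 - (starRingEnd ℂ) x * y)]

lemma pd_le_one {x y : ℂ} (hx : ‖x‖ < 1) (hy : ‖y‖ < 1) :
    pd x y ≤ 1 := (pd_lt_one hx hy).le

lemma sub_le_two_pd {x y : ℂ} (hx : ‖x‖ < 1) (hy : ‖y‖ < 1) :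
    ‖y - x‖ ≤ 2 * pd x y := by
  have hD : 0 < ‖1 - (starRingEnd ℂ) x * y‖ := den_pos hx hy
  have hD2 : ‖1 - (starRingEnd ℂ) x * y‖ ≤ 2 := by
    have h1 : ‖1 - (starRingEnd ℂ) x * y‖ ≤
        ‖(1:ℂ)‖ + ‖(starRingEnd ℂ) x * y‖ := by
      simpa [sub_eq_add_neg] using norm_add_le 1 (-((starRingEnd ℂ) x * y))
    have h2 : ‖(starRingEnd ℂ) x * y‖ ≤ 1 := by
      rw [norm_mul, Complex.norm_conj]
      nlinarith [norm_nonneg x, norm_nonneg y]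
    have h3 : ‖(1:ℂ)‖ = 1 := norm_one
    linarith
  rw [pd, ← mul_div_assoc, le_div_iff₀ hD]
  nlinarith [norm_nonneg (y - x)]

lemma my_abs_le_of_sq {A B : ℝ} (hA : 0 ≤ A) (hB : 0 ≤ B) (h : A ^ 2 ≤ B ^ 2) :
    A ≤ B := by nlinarith

lemma key_ineq {s : ℝ} (hs0 : 0 < s) (hs1 : s < 1) {u : ℂ}
    (hu : ‖u‖ ≤ s ^ 2) :
    (1 + s ^ 2) * ‖(s : ℂ) ^ 2 - u‖ ≤ 2 * s ^ 2 * ‖1 - u‖ := by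
  set v := ‖u‖ with hv
  have hv0 : 0 ≤ v := norm_nonneg u
  have hx : -v ≤ u.re := by
    have := Complex.abs_re_le_norm u
    cases abs_le.mp this with
    | intro h1 h2 => linarith
  have hv2 : v ^ 2 = u.re ^ 2 + u.im ^ 2 := by
    rw [hv, Complex.sq_norm, Complex.normSq_apply]; ring
  have hA : (‖(s : ℂ) ^ 2 - u‖) ^ 2 = s ^ 4 - 2 * s ^ 2 * u.re + v ^ 2 := by
    rw [Complex.sq_norm, Complex.normSq_apply, hv2]
    simp only [Complex.sub_re, Complex.sub_im]
    rw [show ((s : ℂ) ^ 2).re = s ^ 2 by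
      rw [← Complex.ofReal_pow, Complex.ofReal_re]]
    rw [show ((s : ℂ) ^ 2).im = 0 by
      rw [← Complex.ofReal_pow, Complex.ofReal_im]]
    ring
  have hB : (‖1 - u‖) ^ 2 = 1 - 2 * u.re + v ^ 2 := by
    rw [Complex.sq_norm, Complex.normSq_apply, hv2]
    simp only [Complex.sub_re, Complex.sub_im, Complex.one_re, Complex.one_im]
    ring
  have him : u.re ^ 2 ≤ v ^ 2 := by rw [hv2]; nlinarith [sq_nonneg u.im]
  have hsq : ((1 + s ^ 2) * ‖(s : ℂ) ^ 2 - u‖) ^ 2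
      ≤ (2 * s ^ 2 * ‖1 - u‖) ^ 2 := by
    have e1 : ((1 + s ^ 2) * ‖(s : ℂ) ^ 2 - u‖) ^ 2
        = (1 + s ^ 2) ^ 2 * (s ^ 4 - 2 * s ^ 2 * u.re + v ^ 2) := by rw [mul_pow, hA]
    have e2 : (2 * s ^ 2 * ‖1 - u‖) ^ 2
        = 4 * s ^ 4 * (1 - 2 * u.re + v ^ 2) := by rw [mul_pow, hB]; ring
    rw [e1, e2]
    have h1s : (0:ℝ) ≤ 1 - s ^ 2 := by nlinarith
    have t1 : (0:ℝ) ≤ (s ^ 2 - v) * ((1 + 3 * s ^ 2) * v + s ^ 2 * (3 + s ^ 2)) :=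
      mul_nonneg (by linarith) (by positivity)
    have t2 : (0:ℝ) ≤ 2 * s ^ 2 * (1 - s ^ 2) * (u.re + v) :=
      mul_nonneg (mul_nonneg (by positivity) h1s) (by linarith)
    have hbr0 : (0:ℝ) ≤ 2 * s ^ 2 * (1 - s ^ 2) * u.re - (1 + 3 * s ^ 2) * v ^ 2
        + s ^ 4 * (3 + s ^ 2) := by nlinarith [t1, t2]
    have hprod : (0:ℝ) ≤ (1 - s ^ 2) * (2 * s ^ 2 * (1 - s ^ 2) * u.re
        - (1 + 3 * s ^ 2) * v ^ 2 + s ^ 4 * (3 + s ^ 2)) := mul_nonneg h1s hbr0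
    nlinarith [hprod]
  exact my_abs_le_of_sq (by positivity) (by positivity) hsq

lemma mem_ball_abs {z : ℂ} {r : ℝ} : z ∈ Metric.ball (0 : ℂ) r ↔ ‖z‖ < r := by
  rw [Metric.mem_ball, Complex.dist_eq, sub_zero]

lemma abs_lt_abs_of_normSq {w₁ w₂ : ℂ} (h : Complex.normSq w₁ < Complex.normSq w₂) :
    ‖w₁‖ < ‖w₂‖ := by
  have h1 := Complex.sq_norm w₁
  have h2 := Complex.sq_norm w₂
  nlinarith [norm_nonneg w₁, norm_nonneg w₂]

lemma contract {s : ℝ} (hs0 : 0 < s) (hs1 : s < 1) {f : ℂ → ℂ}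
    (hd : DifferentiableOn ℂ f (Metric.ball 0 1))
    (hm : Set.MapsTo f (Metric.ball 0 1) (Metric.ball 0 s))
    {a b : ℂ} (ha : a ∈ Metric.ball (0 : ℂ) 1) (hb : b ∈ Metric.ball (0 : ℂ) 1) :
    pd (f a) (f b) ≤ (2 * s / (1 + s ^ 2)) * pd a b := by
  have ha1 : ‖a‖ < 1 := mem_ball_abs.mp ha
  have hb1 : ‖b‖ < 1 := mem_ball_abs.mp hb
  have hα : ‖f a‖ < s := mem_ball_abs.mp (hm ha)
  have hβ : ‖f b‖ < s := mem_ball_abs.mp (hm hb)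
  have hα1 : ‖f a‖ < 1 := hα.trans hs1
  have hβ1 : ‖f b‖ < 1 := hβ.trans hs1
  have hdab : (1 : ℂ) - (starRingEnd ℂ) a * b ≠ 0 :=
    norm_ne_zero_iff.mp (den_pos ha1 hb1).ne'
  set t : ℂ := (b - a) / (1 - (starRingEnd ℂ) a * b) with htdef
  have htabs : ‖t‖ = pd a b := by rw [htdef, norm_div]; rfl
  have ht1 : ‖t‖ < 1 := htabs ▸ pd_lt_one ha1 hb1
  -- the Möbius map φ with φ 0 = a
  set φ : ℂ → ℂ := fun z => (z + a) / (1 + (starRingEnd ℂ) a * z) with hφdef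
  have hφden : ∀ z : ℂ, ‖z‖ < 1 → (1 : ℂ) + (starRingEnd ℂ) a * z ≠ 0 := by
    intro z hz
    have h0 : 0 < ‖1 - (starRingEnd ℂ) (-a) * z‖ :=
      den_pos (by simpa using ha1) hz
    have := norm_ne_zero_iff.mp h0.ne'
    simpa [map_neg, neg_mul, sub_neg_eq_add] using this
  have hφmaps : Set.MapsTo φ (Metric.ball 0 1) (Metric.ball (0 : ℂ) 1) := by
    intro z hz
    have hz1 : ‖z‖ < 1 := mem_ball_abs.mp hz
    have hden : (1 : ℂ) + (starRingEnd ℂ) a * z ≠ 0 := hφden z hz1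
    show ((z + a) / (1 + (starRingEnd ℂ) a * z)) ∈ Metric.ball (0 : ℂ) 1
    rw [mem_ball_abs, norm_div, div_lt_one (norm_pos_iff.mpr hden)]
    apply abs_lt_abs_of_normSq
    have h := sq_id 1 (-a) z
    simp only [Complex.ofReal_one, one_mul, map_neg, Complex.normSq_neg, neg_mul,
      sub_neg_eq_add] at h
    have h1 : Complex.normSq a < 1 := normSq_lt_one ha1
    have h2 : Complex.normSq z < 1 := normSq_lt_one hz1
    nlinarith
  have hφd : DifferentiableOn ℂ φ (Metric.ball 0 1) := by
    apply DifferentiableOn.div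
    · exact (differentiable_id.add_const a).differentiableOn
    · exact ((differentiable_id.const_mul ((starRingEnd ℂ) a)).const_add 1).differentiableOn
    · intro z hz; exact hφden z (mem_ball_abs.mp hz)
  have hφt : φ t = b := by
    have hden2 : (1 : ℂ) + (starRingEnd ℂ) a * t ≠ 0 := hφden t ht1
    show (t + a) / (1 + (starRingEnd ℂ) a * t) = b
    rw [div_eq_iff hden2, htdef]
    have hdab' : 1 - b * (starRingEnd ℂ) a ≠ 0 := by rw [mul_comm]; exact hdab
    field_simp
    ring
  -- the Möbius map σ of ball 0 s with σ (f a) = 0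
  set σ : ℂ → ℂ := fun w => (s : ℂ) * (w - f a) / ((s : ℂ) ^ 2 - (starRingEnd ℂ) (f a) * w)
    with hσdef
  have habs_s2 : ‖(s : ℂ) ^ 2‖ = s ^ 2 := by
    rw [← Complex.ofReal_pow, Complex.norm_real, Real.norm_eq_abs, abs_of_pos (by positivity)]
  have hσden : ∀ w : ℂ, ‖w‖ < s → ((s : ℂ) ^ 2 - (starRingEnd ℂ) (f a) * w) ≠ 0 := by
    intro w hw hc
    have he : (s : ℂ) ^ 2 = (starRingEnd ℂ) (f a) * w := sub_eq_zero.mp hc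
    have habs := congrArg (‖·‖) he
    rw [norm_mul, Complex.norm_conj, habs_s2] at habs
    nlinarith [norm_nonneg (f a), norm_nonneg w]
  have hσmaps : Set.MapsTo σ (Metric.ball 0 s) (Metric.ball (0 : ℂ) 1) := by
    intro w hws
    have hw : ‖w‖ < s := mem_ball_abs.mp hws
    show ((s : ℂ) * (w - f a) / ((s : ℂ) ^ 2 - (starRingEnd ℂ) (f a) * w)) ∈ Metric.ball (0 : ℂ) 1
    rw [mem_ball_abs, norm_div, div_lt_one (norm_pos_iff.mpr (hσden w hw))]
    have h := sq_id (s ^ 2) (f a) w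
    rw [Complex.ofReal_pow] at h
    have h1 : Complex.normSq (f a) < s ^ 2 := by
      have := Complex.sq_norm (f a); nlinarith [norm_nonneg (f a)]
    have h2 : Complex.normSq w < s ^ 2 := by
      have := Complex.sq_norm w; nlinarith [norm_nonneg w]
    apply abs_lt_abs_of_normSq
    have hnum : Complex.normSq ((s : ℂ) * (w - f a)) = s ^ 2 * Complex.normSq (w - f a) := by
      rw [Complex.normSq_mul, Complex.normSq_ofReal]; ring
    rw [hnum]
    nlinarith
  have hσd : DifferentiableOn ℂ σ (Metric.ball 0 s) := by
    apply DifferentiableOn.div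
    · exact ((differentiable_id.sub_const (f a)).const_mul ((s : ℂ))).differentiableOn
    · exact ((differentiable_id.const_mul ((starRingEnd ℂ) (f a))).const_sub
        ((s : ℂ) ^ 2)).differentiableOn
    · intro w hw; exact hσden w (mem_ball_abs.mp hw)
  have hgd : DifferentiableOn ℂ (σ ∘ f ∘ φ) (Metric.ball 0 1) :=
    hσd.comp (hd.comp hφd hφmaps) (hm.comp hφmaps)
  have hgmaps : Set.MapsTo (σ ∘ f ∘ φ) (Metric.ball 0 1) (Metric.ball (0 : ℂ) 1) :=
    hσmaps.comp (hm.comp hφmaps)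
  have hg0 : (σ ∘ f ∘ φ) 0 = 0 := by
    have hφ0 : φ 0 = a := by
      show (0 + a) / (1 + (starRingEnd ℂ) a * 0) = a
      simp
    show σ (f (φ 0)) = 0
    rw [hφ0]
    show (s : ℂ) * (f a - f a) / ((s : ℂ) ^ 2 - (starRingEnd ℂ) (f a) * f a) = 0
    simp
  have hSch := Complex.norm_le_norm_of_mapsTo_ball_self hgd (hgmaps.mono_right Metric.ball_subset_closedBall) hg0 ht1
  have hgt : (σ ∘ f ∘ φ) t = (s : ℂ) * (f b - f a) / ((s : ℂ) ^ 2 - (starRingEnd ℂ) (f a) * f b) := by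
    show σ (f (φ t)) = _
    rw [hφt]
  rw [hgt, htabs] at hSch
  set A := ‖f b - f a‖ with hAdef
  set D := ‖1 - (starRingEnd ℂ) (f a) * f b‖ with hDdef
  set E := ‖(s : ℂ) ^ 2 - (starRingEnd ℂ) (f a) * f b‖ with hEdef
  have hE0 : 0 < E := norm_pos_iff.mpr (hσden (f b) hβ)
  have hD0 : 0 < D := den_pos hα1 hβ1
  rw [norm_div, norm_mul, Complex.norm_real, Real.norm_eq_abs, abs_of_pos hs0, ← hAdef, ← hEdef,
    div_le_iff₀ hE0] at hSch
  -- hSch : s * A ≤ pd a b * E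
  have hu : ‖(starRingEnd ℂ) (f a) * f b‖ ≤ s ^ 2 := by
    rw [norm_mul, Complex.norm_conj]
    nlinarith [norm_nonneg (f a), norm_nonneg (f b)]
  have h2 : (1 + s ^ 2) * E ≤ 2 * s ^ 2 * D := key_ineq hs0 hs1 hu
  have hP0 : 0 ≤ pd a b := pd_nonneg a b
  have hgoal : pd (f a) (f b) = A / D := rfl
  rw [hgoal, div_le_iff₀ hD0]
  have hpos : (0 : ℝ) < (1 + s ^ 2) * s := by positivity
  refine le_of_mul_le_mul_left ?_ hpos
  have hne : (1 : ℝ) + s ^ 2 ≠ 0 := by positivity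
  calc (1 + s ^ 2) * s * A = (1 + s ^ 2) * (s * A) := by ring
    _ ≤ (1 + s ^ 2) * (pd a b * E) := by
        exact mul_le_mul_of_nonneg_left hSch (by positivity)
    _ = ((1 + s ^ 2) * E) * pd a b := by ring
    _ ≤ (2 * s ^ 2 * D) * pd a b := mul_le_mul_of_nonneg_right h2 hP0
    _ = (1 + s ^ 2) * s * (2 * s / (1 + s ^ 2) * pd a b * D) := by
        field_simp

lemma comps_maps (f : ℕ → ℂ → ℂ)
    (hf : ∀ n, 1 ≤ n → Set.MapsTo (f n) (Metric.ball 0 1) (Metric.ball (0 : ℂ) 1)) :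
    ∀ n, Set.MapsTo (comps f n) (Metric.ball 0 1) (Metric.ball (0 : ℂ) 1) := by
  intro n
  induction n with
  | zero => exact fun x hx => hx
  | succ n ih => exact fun x hx => ih (hf (n + 1) (by omega) hx)

lemma comps_shift (f : ℕ → ℂ → ℂ) (n m : ℕ) :
    comps f (n + m) = comps f n ∘ comps (fun i => f (n + i)) m := by
  induction m with
  | zero => rfl
  | succ m ih =>
      show comps f (n + m) ∘ f (n + m + 1) = _
      rw [ih]
      rfl

lemma comps_pd {s : ℝ} (hs0 : 0 < s) (hs1 : s < 1) (f : ℕ → ℂ → ℂ)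
    (hd : ∀ n, 1 ≤ n → DifferentiableOn ℂ (f n) (Metric.ball 0 1))
    (hm : ∀ n, 1 ≤ n → Set.MapsTo (f n) (Metric.ball 0 1) (Metric.ball 0 s)) :
    ∀ n, ∀ a ∈ Metric.ball (0 : ℂ) 1, ∀ b ∈ Metric.ball (0 : ℂ) 1,
      pd (comps f n a) (comps f n b) ≤ (2 * s / (1 + s ^ 2)) ^ n * pd a b := by
  intro n
  induction n with
  | zero => intro a _ b _; simp [comps]
  | succ n ih =>
      intro a ha b hb
      have hk0 : (0 : ℝ) ≤ 2 * s / (1 + s ^ 2) := by positivity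
      have hfa : f (n + 1) a ∈ Metric.ball (0 : ℂ) 1 :=
        mem_ball_abs.mpr ((mem_ball_abs.mp (hm (n + 1) (by omega) ha)).trans hs1)
      have hfb : f (n + 1) b ∈ Metric.ball (0 : ℂ) 1 :=
        mem_ball_abs.mpr ((mem_ball_abs.mp (hm (n + 1) (by omega) hb)).trans hs1)
      calc pd (comps f (n + 1) a) (comps f (n + 1) b)
          = pd (comps f n (f (n + 1) a)) (comps f n (f (n + 1) b)) := rfl
        _ ≤ (2 * s / (1 + s ^ 2)) ^ n * pd (f (n + 1) a) (f (n + 1) b) := ih _ hfa _ hfb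
        _ ≤ (2 * s / (1 + s ^ 2)) ^ n * (2 * s / (1 + s ^ 2) * pd a b) :=
            mul_le_mul_of_nonneg_left
              (contract hs0 hs1 (hd (n + 1) (by omega)) (hm (n + 1) (by omega)) ha hb)
              (pow_nonneg hk0 n)
        _ = (2 * s / (1 + s ^ 2)) ^ (n + 1) * pd a b := by ring

/-- Gill–Lorentzen: if `X` is a relatively compact subdomain of Δ and `f_n : Δ → X`
are holomorphic, then `F_n = f_1 ∘ ⋯ ∘ f_n` converges locally uniformly on Δ to a
single constant `c ∈ closure X ⊆ Δ`. -/
theorem stmt19 (X : Set ℂ) (hXo : IsOpen X) (hXc : IsConnected X) (hXs : X ⊆ unitDisk)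
    (hrc : closure X ⊆ unitDisk) (f : ℕ → ℂ → ℂ) (hf : ∀ n, 1 ≤ n → HolOn (f n) X) :
    ∃ c ∈ closure X, TendstoLocallyUniformlyOn (fun n => comps f n)
      (fun _ => c) atTop unitDisk := by
  have hXne : X.Nonempty := hXc.nonempty
  have hbdd : Bornology.IsBounded X := Metric.isBounded_ball.subset hXs
  have hcomp : IsCompact (closure X) := hbdd.isCompact_closure
  obtain ⟨z₀, hz₀, hmax'⟩ :=
    hcomp.exists_isMaxOn hXne.closure continuous_norm.continuousOn
  have hmax : ∀ z ∈ closure X, ‖z‖ ≤ ‖z₀‖ := fun z hz => hmax' hz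
  have hz₀1 : ‖z₀‖ < 1 := mem_ball_abs.mp (hrc hz₀)
  have habs0 : 0 ≤ ‖z₀‖ := norm_nonneg z₀
  set s : ℝ := (‖z₀‖ + 1) / 2 with hsdef
  have hs0 : 0 < s := by rw [hsdef]; linarith
  have hs1 : s < 1 := by rw [hsdef]; linarith
  have hm : ∀ n, 1 ≤ n → Set.MapsTo (f n) (Metric.ball 0 1) (Metric.ball (0 : ℂ) s) := by
    intro n hn z hz
    have hz' : f n z ∈ X := (hf n hn).2 hz
    have := hmax (f n z) (subset_closure hz')
    exact mem_ball_abs.mpr (by rw [hsdef]; linarith)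
  have hd : ∀ n, 1 ≤ n → DifferentiableOn ℂ (f n) (Metric.ball 0 1) :=
    fun n hn => (hf n hn).1
  set k : ℝ := 2 * s / (1 + s ^ 2) with hkdef
  have hk0 : 0 ≤ k := by rw [hkdef]; positivity
  have hk1 : k < 1 := by
    rw [hkdef, div_lt_one (by positivity)]
    nlinarith [sq_nonneg (1 - s)]
  have hmaps1 : ∀ n, 1 ≤ n → Set.MapsTo (f n) (Metric.ball 0 1) (Metric.ball (0 : ℂ) 1) :=
    fun n hn z hz => mem_ball_abs.mpr ((mem_ball_abs.mp (hm n hn hz)).trans hs1)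
  have hcm := comps_maps f hmaps1
  have hpd := comps_pd hs0 hs1 f hd hm
  set c : ℕ → ℂ := fun n => comps f n 0 with hcdef
  have h0mem : (0 : ℂ) ∈ Metric.ball (0 : ℂ) 1 := mem_ball_abs.mpr (by simp)
  have hdistc : ∀ n m : ℕ, dist (c n) (c (n + m)) ≤ 2 * k ^ n := by
    intro n m
    set w : ℂ := comps (fun i => f (n + i)) m 0 with hwdef
    have hw : w ∈ Metric.ball (0 : ℂ) 1 :=
      comps_maps _ (fun j hj => hmaps1 (n + j) (by omega)) m h0mem
    have he : c (n + m) = comps f n w := by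
      rw [hcdef]
      simp only [comps_shift f n m]
      rfl
    have h1 : pd (comps f n w) (comps f n 0) ≤ k ^ n * pd w 0 := hpd n w hw 0 h0mem
    have h2 : pd w 0 ≤ 1 := (pd_lt_one (mem_ball_abs.mp hw) (by simp)).le
    have h3 := sub_le_two_pd (mem_ball_abs.mp (hcm n hw)) (mem_ball_abs.mp (hcm n h0mem))
    have hkn : (0 : ℝ) ≤ k ^ n := pow_nonneg hk0 n
    calc dist (c n) (c (n + m)) = ‖comps f n 0 - comps f n w‖ := by
          rw [he, Complex.dist_eq, hcdef]
      _ ≤ 2 * pd (comps f n w) (comps f n 0) := h3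
      _ ≤ 2 * (k ^ n * pd w 0) := by linarith
      _ ≤ 2 * k ^ n := by nlinarith
  have hcauchy : CauchySeq c :=
    cauchySeq_of_le_geometric k 2 hk1 (fun n => hdistc n 1)
  obtain ⟨L, hL⟩ := cauchySeq_tendsto_of_complete hcauchy
  have hinX : ∀ n, 1 ≤ n → c n ∈ X := by
    intro n hn
    obtain ⟨m, rfl⟩ : ∃ m, n = m + 1 := ⟨n - 1, by omega⟩
    have hw : comps (fun i => f (1 + i)) m 0 ∈ Metric.ball (0 : ℂ) 1 :=
      comps_maps _ (fun j hj => hmaps1 (1 + j) (by omega)) m h0mem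
    have he : c (m + 1) = f 1 (comps (fun i => f (1 + i)) m 0) := by
      rw [hcdef]
      simp only [show m + 1 = 1 + m by omega, comps_shift f 1 m]
      rfl
    rw [he]
    exact (hf 1 le_rfl).2 hw
  have hLX : L ∈ closure X :=
    mem_closure_of_tendsto hL (eventually_atTop.mpr ⟨1, fun n hn => hinX n hn⟩)
  have hdistL : ∀ n, dist (c n) L ≤ 2 * k ^ n := by
    intro n
    have h5 : Tendsto (fun m => c (m + n)) atTop (𝓝 L) := hL.comp (tendsto_add_atTop_nat n)
    refine le_of_tendsto (tendsto_const_nhds.dist h5) (Eventually.of_forall fun m => ?_)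
    rw [Nat.add_comm m n]
    exact hdistc n m
  have hbound : ∀ n, ∀ z ∈ Metric.ball (0 : ℂ) 1, dist (comps f n z) L ≤ 4 * k ^ n := by
    intro n z hz
    have h1 : pd (comps f n z) (comps f n 0) ≤ k ^ n * pd z 0 := hpd n z hz 0 h0mem
    have h2 : pd z 0 ≤ 1 := (pd_lt_one (mem_ball_abs.mp hz) (by simp)).le
    have h3 := sub_le_two_pd (mem_ball_abs.mp (hcm n hz)) (mem_ball_abs.mp (hcm n h0mem))
    have hkn : (0 : ℝ) ≤ k ^ n := pow_nonneg hk0 n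
    have h4 : dist (comps f n z) (c n) ≤ 2 * k ^ n := by
      rw [hcdef, dist_comm, Complex.dist_eq]
      calc ‖comps f n 0 - comps f n z‖
          ≤ 2 * pd (comps f n z) (comps f n 0) := h3
        _ ≤ 2 * (k ^ n * pd z 0) := by linarith
        _ ≤ 2 * k ^ n := by nlinarith
    calc dist (comps f n z) L ≤ dist (comps f n z) (c n) + dist (c n) L := dist_triangle _ _ _
      _ ≤ 2 * k ^ n + 2 * k ^ n := add_le_add h4 (hdistL n)
      _ = 4 * k ^ n := by ring
  refine ⟨L, hLX, ?_⟩
  apply TendstoUniformlyOn.tendstoLocallyUniformlyOn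
  rw [Metric.tendstoUniformlyOn_iff]
  intro ε hε
  have htd : Tendsto (fun n => 4 * k ^ n) atTop (𝓝 0) := by
    simpa using (tendsto_pow_atTop_nhds_zero_of_lt_one hk0 hk1).const_mul 4
  have hev : ∀ᶠ n in atTop, 4 * k ^ n < ε := htd.eventually_lt_const hε
  filter_upwards [hev] with n hn x hx
  have hb := hbound n x hx
  calc dist ((fun _ => L) x) (comps f n x) = dist (comps f n x) L := dist_comm _ _
    _ ≤ 4 * k ^ n := hb
    _ < ε := hn
end
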